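/- Let η and l be positive integers with 1 ≤ l ≤ η, and let x_1, …, x_{η+l} be pairwise distinct nonzero elements of a field. Let M be the (η+l)×(η+l) matrix whose rows are (x_1^j, …, x_{η+l}^j) for j ∈ {−l, −l+1, …, −1, 1, 2, …, η}. Then det(M) = σ_{η}(x_1,…,x_{η+l}) / (x_1 x_2 ⋯ x_{η+l})^l · det(V(x_1,…,x_{η+l})), where σ_η is the elementary symmetric polynomial of degree η in η+l variables and V is the Vandermonde matrix with rows (x_1^j,…,x_{η+l}^j) for j = 0,1,…,η+l−1. -/

import Mathlib

open Finset Matrix Polynomial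

lemma prod_Ioi_split {M : Type*} [CommMonoid M] (n : ℕ) (G : Fin (n+1) → Fin (n+1) → M) :
    (∏ i : Fin (n+1), ∏ j ∈ Finset.Ioi i, G i j)
      = (∏ i : Fin n, ∏ j ∈ Finset.Ioi i, G i.castSucc j.castSucc) *
        ∏ i : Fin n, G i.castSucc (Fin.last n) := by
  have hIoi : ∀ (m : ℕ) (a : Fin m) (f : Fin m → M),
      ∏ j ∈ Finset.Ioi a, f j = ∏ j, if a < j then f j else 1 := by
    intro m a f
    rw [← Finset.prod_filter]
    congr 1
    ext j
    simp [Finset.mem_Ioi]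
  rw [Fin.prod_univ_castSucc]
  have hlast : ∏ j ∈ Finset.Ioi (Fin.last n), G (Fin.last n) j = 1 := by
    apply Finset.prod_eq_one
    intro j hj
    rw [Finset.mem_Ioi] at hj
    exact absurd hj (Fin.le_last j).not_gt
  rw [hlast, mul_one, ← Finset.prod_mul_distrib]
  refine Finset.prod_congr rfl fun i _ => ?_
  rw [hIoi, hIoi, Fin.prod_univ_castSucc]
  simp [Fin.castSucc_lt_castSucc_iff, Fin.castSucc_lt_last]

lemma key_det {F : Type*} [CommRing F] (n : ℕ) (x : Fin n → F) (k : Fin (n+1)) :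
    (Matrix.of fun i j : Fin n => x j ^ ((k.succAbove i : ℕ))).det
      = (Multiset.map x Finset.univ.val).esymm (n - k) * (Matrix.vandermonde x).det := by
  classical
  set y : Fin (n+1) → F[X] := Fin.snoc (fun i => C (x i)) X with hy
  have hyc : ∀ p : Fin n, y p.castSucc = C (x p) := fun p => Fin.snoc_castSucc _ _ _
  have hyl : y (Fin.last n) = X := Fin.snoc_last _ _
  set d : Fin (n+1) → F := fun j =>
    (Matrix.of fun p q : Fin n => x p ^ ((j.succAbove q : ℕ))).det with hd
  -- expansion along last row
  have h2 : (Matrix.vandermonde y).det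
      = ∑ j : Fin (n+1), (-1) ^ ((n : ℕ) + (j : ℕ)) * (C (d j) * X ^ (j : ℕ)) := by
    rw [Matrix.det_succ_row (Matrix.vandermonde y) (Fin.last n)]
    refine Finset.sum_congr rfl fun j _ => ?_
    have hsub : (Matrix.vandermonde y).submatrix (Fin.last n).succAbove j.succAbove
        = (C : F →+* F[X]).mapMatrix (Matrix.of fun p q : Fin n => x p ^ ((j.succAbove q : ℕ))) := by
      ext p q
      simp [Matrix.vandermonde_apply, Fin.succAbove_last, hyc, map_pow]
    rw [hsub, ← RingHom.map_det]
    simp only [Matrix.vandermonde_apply, hyl, Fin.val_last, hd]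
    ring
  -- product formula
  have h1 : (Matrix.vandermonde y).det
      = C ((Matrix.vandermonde x).det) * ∏ i : Fin n, (X - C (x i)) := by
    rw [Matrix.det_vandermonde, Matrix.det_vandermonde, prod_Ioi_split n (fun i j => y j - y i)]
    simp only [hyc, hyl]
    rw [map_prod]
    congr 1
    refine Finset.prod_congr rfl fun i _ => ?_
    rw [map_prod]
    refine Finset.prod_congr rfl fun j _ => ?_
    rw [map_sub]
  -- compare coefficients at k
  have hc := congrArg (fun p : F[X] => p.coeff (k : ℕ)) (h2.symm.trans h1)
  simp only [Polynomial.finset_sum_coeff] at hc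
  have hterm : ∀ j : Fin (n+1),
      ((-1 : F[X]) ^ ((n : ℕ) + (j : ℕ)) * (C (d j) * X ^ (j : ℕ))).coeff (k : ℕ)
        = ((-1 : F) ^ ((n : ℕ) + (j : ℕ)) * d j) * (if k = j then 1 else 0) := by
    intro j
    have h3 : ((-1 : F[X]) ^ ((n : ℕ) + (j : ℕ)) * (C (d j) * X ^ (j : ℕ)))
        = C ((-1 : F) ^ ((n : ℕ) + (j : ℕ)) * d j) * X ^ (j : ℕ) := by
      rw [Polynomial.C_mul, Polynomial.C_pow, Polynomial.C_neg, Polynomial.C_1]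
      ring
    rw [h3, Polynomial.coeff_C_mul, Polynomial.coeff_X_pow]
    congr 1
    simp [Fin.val_inj]
  simp only [hterm] at hc
  rw [Finset.sum_mul_boole] at hc
  simp only [Finset.mem_univ, if_true, Polynomial.coeff_C_mul] at hc
  -- Vieta on the RHS
  have hk : (k : ℕ) ≤ n := Nat.lt_succ_iff.mp k.isLt
  have hcard : Multiset.card (Multiset.map x Finset.univ.val) = n := by simp
  have hprod : (∏ i : Fin n, (X - C (x i)))
      = ((Multiset.map x Finset.univ.val).map fun t => X - (C t : F[X])).prod := by
    rw [Multiset.map_map]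
    rfl
  rw [hprod, Multiset.prod_X_sub_C_coeff _ (by rw [hcard]; exact hk), hcard] at hc
  -- extract d k
  have hdk : d k = (Multiset.map x Finset.univ.val).esymm (n - k) * (Matrix.vandermonde x).det := by
    have heven : Even ((n + (k : ℕ)) + (n + (k : ℕ))) := ⟨n + k, rfl⟩
    have hpow : (-1 : F) ^ ((n : ℕ) + (k : ℕ)) * (-1 : F) ^ (n - (k : ℕ)) = 1 := by
      rw [← pow_add, show n + (k : ℕ) + (n - (k : ℕ)) = 2 * n by omega]
      exact (even_two_mul n).neg_one_pow
    calc d k = (-1 : F) ^ ((n : ℕ) + (k : ℕ)) * ((-1 : F) ^ ((n : ℕ) + (k : ℕ)) * d k) := by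
          rw [← mul_assoc, ← pow_add, heven.neg_one_pow, one_mul]
      _ = (-1 : F) ^ ((n : ℕ) + (k : ℕ)) *
            ((Matrix.vandermonde x).det *
              ((-1) ^ (n - (k : ℕ)) * (Multiset.map x Finset.univ.val).esymm (n - (k : ℕ)))) := by
          rw [hc]
      _ = ((-1 : F) ^ ((n : ℕ) + (k : ℕ)) * (-1 : F) ^ (n - (k : ℕ))) *
            ((Multiset.map x Finset.univ.val).esymm (n - k) * (Matrix.vandermonde x).det) := by
          ring
      _ = _ := by rw [hpow, one_mul]
  have htr : (Matrix.of fun i j : Fin n => x j ^ ((k.succAbove i : ℕ)))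
      = (Matrix.of fun p q : Fin n => x p ^ ((k.succAbove q : ℕ))).transpose := by
    ext i j
    simp [Matrix.transpose_apply]
  rw [htr, Matrix.det_transpose]
  exact hdk

theorem det_M_eq (η l : ℕ) (hl : 1 ≤ l) (hlη : l ≤ η)
    {F : Type*} [Field F] (x : Fin (η + l) → F)
    (hx0 : ∀ i, x i ≠ 0) (hinj : Function.Injective x) :
    (Matrix.of fun i j : Fin (η + l) =>
        x j ^ (if (i : ℕ) < l then (i : ℤ) - l else (i : ℤ) - l + 1)).det =
      (∑ S ∈ (Finset.univ : Finset (Fin (η + l))).powersetCard η, ∏ j ∈ S, x j) /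
        (∏ j, x j) ^ l * (Matrix.vandermonde x).det := by
  classical
  have hln : l < (η + l) + 1 := by omega
  set k : Fin ((η + l) + 1) := ⟨l, hln⟩ with hk
  have hsA : ∀ i : Fin (η + l),
      ((k.succAbove i : ℕ) : ℤ) = (if (i : ℕ) < l then (i : ℤ) else (i : ℤ) + 1) := by
    intro i
    rcases lt_or_ge (i : ℕ) l with h | h
    · rw [Fin.succAbove_of_castSucc_lt]
      · simp [h]
      · simpa [Fin.lt_def] using h
    · rw [Fin.succAbove_of_le_castSucc]
      · simp [h, Nat.not_lt.mpr h]
      · simpa [Fin.le_def] using h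
  have hent : ∀ i j : Fin (η + l),
      x j ^ (if (i : ℕ) < l then (i : ℤ) - l else (i : ℤ) - l + 1)
        = (x j ^ l)⁻¹ * x j ^ ((k.succAbove i : ℕ)) := by
    intro i j
    have he : (if (i : ℕ) < l then (i : ℤ) - l else (i : ℤ) - l + 1)
        = ((k.succAbove i : ℕ) : ℤ) - (l : ℤ) := by
      rw [hsA i]; split <;> ring
    rw [he, zpow_sub₀ (hx0 j), zpow_natCast, zpow_natCast]
    ring
  have step1 : (Matrix.of fun i j : Fin (η + l) =>
      x j ^ (if (i : ℕ) < l then (i : ℤ) - l else (i : ℤ) - l + 1)).det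
      = (∏ j, (x j ^ l)⁻¹) *
        (Matrix.of fun i j : Fin (η + l) => x j ^ ((k.succAbove i : ℕ))).det := by
    rw [← Matrix.det_mul_row]
    congr 1
    ext i j
    exact hent i j
  rw [step1, key_det (η + l) x k]
  have hnk : (η + l) - (k : ℕ) = η := by simp [hk]
  have hesymm : (Multiset.map x Finset.univ.val).esymm η
      = ∑ S ∈ (Finset.univ : Finset (Fin (η + l))).powersetCard η, ∏ j ∈ S, x j :=
    Finset.esymm_map_val x _ η
  rw [hnk, hesymm]
  have hprodne : (∏ j, x j) ≠ 0 := Finset.prod_ne_zero_iff.mpr fun j _ => hx0 j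
  have hpinv : (∏ j : Fin (η + l), (x j ^ l)⁻¹) = ((∏ j, x j) ^ l)⁻¹ := by
    rw [← Finset.prod_pow, ← Finset.prod_inv_distrib]
  rw [hpinv]
  field_simp
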